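/- Let ν ∈ ℝ² be a unit vector and ν⊥ its rotation by π/2, let x₀ ∈ ℝ², and let C_j, S_j (j = 1,…,4) be real numbers with D = (C₃S₂−C₂S₃)(C₁²S₄−C₄²S₁) − (C₁S₄−C₄S₁)(C₃²S₂−C₂²S₃) ≠ 0, with coefficients a₁ = 2S₄(C₃S₂−C₂S₃)/D, a₂ = 2S₃(C₁S₄−C₄S₁)/D, a₃ = −2S₂(C₁S₄−C₄S₁)/D, a₄ = −2S₁(C₃S₂−C₂S₃)/D, and set x_j = x₀ + C_j ν + S_j ν⊥. Then for every function of the form u(x) = p + q·(x−x₀) + (γ/2)((x−x₀)·ν)² with p, γ ∈ ℝ and q ∈ ℝ², the generalised finite difference approximation is exact: Σ_{j=1}^{4} a_j (u(x_j) − u(x₀)) = γ, and γ equals the second directional derivative of u in the direction ν. -/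

import Mathlib

/-- The generalised finite difference approximation is exact on
quadratic functions of the form `u(x) = p + q·(x−x₀) + (γ/2)((x−x₀)·ν)²`,
and recovers `γ`, the second directional derivative of `u` in direction `ν`. -/
theorem gfd_exact_on_quadratics
    (ν : ℝ × ℝ) (hν : ν.1^2 + ν.2^2 = 1)
    (νperp : ℝ × ℝ) (hνperp : νperp = (-ν.2, ν.1))
    (x₀ : ℝ × ℝ)
    (C₁ S₁ C₂ S₂ C₃ S₃ C₄ S₄ D a₁ a₂ a₃ a₄ : ℝ)
    (hD : D = (C₃*S₂ - C₂*S₃) * (C₁^2*S₄ - C₄^2*S₁)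
            - (C₁*S₄ - C₄*S₁) * (C₃^2*S₂ - C₂^2*S₃))
    (hD0 : D ≠ 0)
    (ha₁ : a₁ = 2*S₄*(C₃*S₂ - C₂*S₃) / D)
    (ha₂ : a₂ = 2*S₃*(C₁*S₄ - C₄*S₁) / D)
    (ha₃ : a₃ = -2*S₂*(C₁*S₄ - C₄*S₁) / D)
    (ha₄ : a₄ = -2*S₁*(C₃*S₂ - C₂*S₃) / D)
    (x₁ x₂ x₃ x₄ : ℝ × ℝ)
    (hx₁ : x₁ = x₀ + C₁ • ν + S₁ • νperp)
    (hx₂ : x₂ = x₀ + C₂ • ν + S₂ • νperp)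
    (hx₃ : x₃ = x₀ + C₃ • ν + S₃ • νperp)
    (hx₄ : x₄ = x₀ + C₄ • ν + S₄ • νperp)
    (p γ : ℝ) (q : ℝ × ℝ) (u : ℝ × ℝ → ℝ)
    (hu : ∀ x : ℝ × ℝ, u x = p + (q.1 * (x - x₀).1 + q.2 * (x - x₀).2)
            + (γ/2) * ((x - x₀).1 * ν.1 + (x - x₀).2 * ν.2)^2) :
    a₁ * (u x₁ - u x₀) + a₂ * (u x₂ - u x₀)
      + a₃ * (u x₃ - u x₀) + a₄ * (u x₄ - u x₀) = γ ∧
    deriv (deriv (fun t : ℝ => u (x₀ + t • ν))) 0 = γ := by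
  set Q : ℝ := q.1 * ν.1 + q.2 * ν.2 with hQ
  set R : ℝ := -q.1 * ν.2 + q.2 * ν.1 with hR
  have hval : ∀ (C S : ℝ), u (x₀ + C • ν + S • νperp) - u x₀
      = C * Q + S * R + (γ/2) * C^2 := by
    intro C S
    simp only [hu, hνperp, Prod.fst_add, Prod.snd_add, Prod.smul_fst, Prod.smul_snd,
      Prod.fst_sub, Prod.snd_sub, smul_eq_mul, Prod.mk.injEq]
    have h2 : (x₀.1 + C * ν.1 + S * (-ν.2) - x₀.1) * ν.1
        + (x₀.2 + C * ν.2 + S * ν.1 - x₀.2) * ν.2 = C := by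
      linear_combination (C : ℝ) * hν
    rw [h2, hQ, hR]
    ring
  constructor
  · rw [hx₁, hx₂, hx₃, hx₄, hval, hval, hval, hval, ha₁, ha₂, ha₃, ha₄]
    field_simp
    linear_combination (-1)*γ*hD
  · have hu0 : u x₀ = p := by simp [hu]
    have key : (fun t : ℝ => u (x₀ + t • ν)) = fun t => (γ/2)*t^2 + Q*t + p := by
      funext t
      have h := hval t 0
      simp only [zero_smul, add_zero] at h
      linarith [h]
    rw [key]
    have h1 : ∀ t : ℝ, HasDerivAt (fun t : ℝ => (γ/2)*t^2 + Q*t + p) (γ*t + Q) t := by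
      intro t
      have := (((hasDerivAt_pow 2 t).const_mul (γ/2)).add
        ((hasDerivAt_id t).const_mul Q)).add_const p
      convert this using 1
      · rfl
      · rfl
      · rfl
      simp
      ring
    have d1 : deriv (fun t : ℝ => (γ/2)*t^2 + Q*t + p) = fun t => γ*t + Q :=
      funext fun t => (h1 t).deriv
    rw [d1]
    have h2 : HasDerivAt (fun t : ℝ => γ*t + Q) γ 0 := by
      have := ((hasDerivAt_id (0:ℝ)).const_mul γ).add_const Q
      simpa using this
    exact h2.deriv
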